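/- Let Λ = {λ₁,...,λ_K} ⊂ ℂ be a finite set of distinct complex numbers satisfying the XXX Bethe equations: for each i, (λᵢ + i/2)^L · ∏_{j≠i}(λᵢ - λⱼ - i) = (λᵢ - i/2)^L · ∏_{j≠i}(λᵢ - λⱼ + i). If there exist indices i₁, i₂ with λ_{i₁} - λ_{i₂} = i, then λ_{i₁} = i/2 and λ_{i₂} = -i/2. In other words, the only possible 'center of strings' s (with s + i/2 ∈ Λ and s - i/2 ∈ Λ) is s = 0. -/
import Mathlib


open Complex Finset

/-- Property 1 of the paper: for distinct solutions of the (denominator-cleared)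
XXX Bethe equations, the only possible string center is 0: if two roots differ
by `i`, they must be `i/2` and `-i/2`. -/
theorem xxx_string_center_is_zero (L K : ℕ) (hL : 1 ≤ L) (hK : 1 ≤ K)
    (l : Fin K → ℂ) (hdist : Function.Injective l)
    (hBethe : ∀ i : Fin K,
      (l i + I / 2) ^ L * ∏ j ∈ univ.erase i, (l i - l j - I) =
      (l i - I / 2) ^ L * ∏ j ∈ univ.erase i, (l i - l j + I)) :
    ∀ i₁ i₂ : Fin K, l i₁ - l i₂ = I → l i₁ = I / 2 ∧ l i₂ = -(I / 2) := by
  classical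
  have hI : (I : ℂ) ≠ 0 := I_ne_zero
  have hLne : L ≠ 0 := by omega
  -- pigeonhole: an arithmetic progression with nonzero step leaves the finite range of l
  have hpig : ∀ (c d : ℂ), d ≠ 0 → ∃ n : ℕ, c + n * d ∉ Set.range l := by
    intro c d hd
    by_contra h
    push_neg at h
    choose f hf using h
    obtain ⟨a, b, hab, hfab⟩ := Finite.exists_ne_map_eq_of_infinite f
    apply hab
    have h1 : c + (a : ℂ) * d = c + (b : ℂ) * d := by rw [← hf a, ← hf b, hfab]
    have h2 : (a : ℂ) = b := mul_right_cancel₀ hd (add_left_cancel h1)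
    exact_mod_cast h2
  -- top of a string must be I/2
  have htop : ∀ a : Fin K, l a - I ∈ Set.range l → l a + I ∉ Set.range l →
      l a = I / 2 := by
    intro a h1 h2
    obtain ⟨j, hj⟩ := h1
    have hja : j ≠ a := by
      intro h
      rw [h] at hj
      apply hI
      linear_combination hj
    have hL0 : (l a + I / 2) ^ L * ∏ j' ∈ univ.erase a, (l a - l j' - I) = 0 := by
      apply mul_eq_zero_of_right
      apply Finset.prod_eq_zero (Finset.mem_erase.mpr ⟨hja, mem_univ j⟩)
      rw [hj]; ring
    have hR0 := (hBethe a).symm.trans hL0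
    rcases mul_eq_zero.mp hR0 with h | h
    · have := pow_eq_zero_iff hLne |>.mp h
      linear_combination this
    · exfalso
      obtain ⟨j', _, hj'⟩ := Finset.prod_eq_zero_iff.mp h
      exact h2 ⟨j', by linear_combination -hj'⟩
  -- bottom of a string must be -I/2
  have hbot : ∀ b : Fin K, l b + I ∈ Set.range l → l b - I ∉ Set.range l →
      l b = -(I / 2) := by
    intro b h1 h2
    obtain ⟨j, hj⟩ := h1
    have hjb : j ≠ b := by
      intro h
      rw [h] at hj
      apply hI
      linear_combination -hj
    have hR0 : (l b - I / 2) ^ L * ∏ j' ∈ univ.erase b, (l b - l j' + I) = 0 := by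
      apply mul_eq_zero_of_right
      apply Finset.prod_eq_zero (Finset.mem_erase.mpr ⟨hjb, mem_univ j⟩)
      rw [hj]; ring
    have hL0 := (hBethe b).trans hR0
    rcases mul_eq_zero.mp hL0 with h | h
    · have := pow_eq_zero_iff hLne |>.mp h
      linear_combination this
    · exfalso
      obtain ⟨j', _, hj'⟩ := Finset.prod_eq_zero_iff.mp h
      exact h2 ⟨j', by linear_combination -hj'⟩
  -- climbing up the string reaches I/2
  have claimU : ∀ n : ℕ, ∀ z : ℂ, z ∈ Set.range l → z - I ∈ Set.range l →
      z + ((n : ℂ) + 1) * I ∉ Set.range l → ∃ m : ℕ, z + (m : ℂ) * I = I / 2 := by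
    intro n
    induction n with
    | zero =>
      intro z hz hz1 hz2
      obtain ⟨a, ha⟩ := hz
      have hz2' : z + I ∉ Set.range l := by simpa using hz2
      have := htop a (by rw [ha]; exact hz1) (by rw [ha]; exact hz2')
      rw [ha] at this
      exact ⟨0, by push_cast; linear_combination this⟩
    | succ n ih =>
      intro z hz hz1 hz2
      by_cases h : z + I ∈ Set.range l
      · have hz2' : z + I + ((n : ℂ) + 1) * I ∉ Set.range l := by
          rw [show z + I + ((n : ℂ) + 1) * I = z + ((↑(n + 1) : ℂ) + 1) * I from by
            push_cast; ring]
          exact hz2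
        obtain ⟨m, hm⟩ := ih (z + I) h ⟨Exists.choose hz, by
          rw [Exists.choose_spec hz]; ring⟩ hz2'
        exact ⟨m + 1, by push_cast; linear_combination hm⟩
      · obtain ⟨a, ha⟩ := hz
        have := htop a (by rw [ha]; exact hz1) (by rw [ha]; exact h)
        rw [ha] at this
        exact ⟨0, by push_cast; linear_combination this⟩
  -- descending the string reaches -I/2
  have claimD : ∀ n : ℕ, ∀ z : ℂ, z ∈ Set.range l → z + I ∈ Set.range l →
      z - ((n : ℂ) + 1) * I ∉ Set.range l → ∃ m : ℕ, z - (m : ℂ) * I = -(I / 2) := by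
    intro n
    induction n with
    | zero =>
      intro z hz hz1 hz2
      obtain ⟨b, hb⟩ := hz
      have hz2' : z - I ∉ Set.range l := by simpa using hz2
      have := hbot b (by rw [hb]; exact hz1) (by rw [hb]; exact hz2')
      rw [hb] at this
      exact ⟨0, by push_cast; linear_combination this⟩
    | succ n ih =>
      intro z hz hz1 hz2
      by_cases h : z - I ∈ Set.range l
      · have hz2' : z - I - ((n : ℂ) + 1) * I ∉ Set.range l := by
          rw [show z - I - ((n : ℂ) + 1) * I = z - ((↑(n + 1) : ℂ) + 1) * I from by
            push_cast; ring]
          exact hz2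
        obtain ⟨m, hm⟩ := ih (z - I) h ⟨Exists.choose hz, by
          rw [Exists.choose_spec hz]; ring⟩ hz2'
        exact ⟨m + 1, by push_cast; linear_combination hm⟩
      · obtain ⟨b, hb⟩ := hz
        have := hbot b (by rw [hb]; exact hz1) (by rw [hb]; exact h)
        rw [hb] at this
        exact ⟨0, by push_cast; linear_combination this⟩
  intro i₁ i₂ h12
  -- go up from l i₁
  obtain ⟨nU, hnU⟩ := hpig (l i₁ + I) I hI
  have hnU' : l i₁ + ((nU : ℂ) + 1) * I ∉ Set.range l := by
    rw [show l i₁ + ((nU : ℂ) + 1) * I = l i₁ + I + (nU : ℂ) * I from by ring]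
    exact hnU
  obtain ⟨m, hm⟩ := claimU nU (l i₁) ⟨i₁, rfl⟩ ⟨i₂, by linear_combination -h12⟩ hnU'
  -- go down from l i₂
  obtain ⟨nD, hnD⟩ := hpig (l i₂ - I) (-I) (neg_ne_zero.mpr hI)
  have hnD' : l i₂ - ((nD : ℂ) + 1) * I ∉ Set.range l := by
    rw [show l i₂ - ((nD : ℂ) + 1) * I = l i₂ - I + (nD : ℂ) * -I from by ring]
    exact hnD
  obtain ⟨m', hm'⟩ := claimD nD (l i₂) ⟨i₂, rfl⟩ ⟨i₁, by linear_combination h12⟩ hnD'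
  -- string has length exactly 2
  have h3 : ((m : ℂ) + (m' : ℂ)) * I = 0 := by linear_combination hm - hm' - h12
  have h4 : (m : ℂ) + (m' : ℂ) = 0 := (mul_eq_zero.mp h3).resolve_right hI
  have h5 : m + m' = 0 := by exact_mod_cast h4
  have hm0 : m = 0 := by omega
  have hm'0 : m' = 0 := by omega
  subst hm0 hm'0
  push_cast at hm hm'
  constructor
  · linear_combination hm
  · linear_combination hm'
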